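/- Let m ≥ 0 be an integer, n := m+3, and a : ℤ → ℝ a sequence. Then the frieze determined by a is closed of width m (i.e. K(a_i,…,a_{i+m}) = 1 and K(a_i,…,a_{i+m+1}) = 0 for all i ∈ ℤ) if and only if the second-order difference equation V_i = a_i·V_{i-1} − V_{i-2} is n-superperiodic, that is: a_{i+n} = a_i for all i, and every sequence V : ℤ → ℝ satisfying V_i = a_i·V_{i-1} − V_{i-2} for all i ∈ ℤ also satisfies V_{i+n} = −V_i for all i ∈ ℤ. -/
import Mathlib

noncomputable def detK (a : ℤ → ℝ) (i : ℤ) (n : ℕ) : ℝ :=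
  Matrix.det (Matrix.of fun r c : Fin n =>
    if (r : ℕ) = (c : ℕ) then a (i + (r : ℕ))
    else if (r : ℕ) = (c : ℕ) + 1 ∨ (c : ℕ) = (r : ℕ) + 1 then 1 else 0)

lemma detK_zero (a : ℤ → ℝ) (i : ℤ) : detK a i 0 = 1 := by
  simp [detK, Matrix.det_fin_zero]

lemma detK_one (a : ℤ → ℝ) (i : ℤ) : detK a i 1 = a i := by
  simp [detK, Matrix.det_fin_one]

lemma val_succAbove {n : ℕ} (p : Fin (n+1)) (c : Fin n) :
    ((p.succAbove c : Fin (n+1)) : ℕ) = if (c:ℕ) < (p:ℕ) then (c:ℕ) else (c:ℕ)+1 := by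
  rw [Fin.succAbove]
  split_ifs with h1 h2 h3 <;> simp_all [Fin.lt_def]

lemma detK_left (a : ℤ → ℝ) (i : ℤ) (n : ℕ) :
    detK a i (n+2) = a i * detK a (i+1) (n+1) - detK a (i+2) n := by
  set M : Matrix (Fin (n+2)) (Fin (n+2)) ℝ := Matrix.of fun r c : Fin (n+2) =>
    if (r : ℕ) = (c : ℕ) then a (i + (r : ℕ))
    else if (r : ℕ) = (c : ℕ) + 1 ∨ (c : ℕ) = (r : ℕ) + 1 then 1 else 0 with hM
  have : detK a i (n+2) = M.det := rfl
  rw [this, Matrix.det_succ_row_zero, Fin.sum_univ_succ, Fin.sum_univ_succ]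
  have htail : ∀ j : Fin n,
      (-1 : ℝ) ^ ((j.succ.succ : Fin (n+2)) : ℕ) * M 0 j.succ.succ *
        (M.submatrix Fin.succ (Fin.succAbove j.succ.succ)).det = 0 := by
    intro j
    have : M 0 j.succ.succ = 0 := by
      simp only [hM, Matrix.of_apply, Fin.val_succ, Fin.val_zero]
      split_ifs <;> first | rfl | (exfalso; omega) | simp_all | (exfalso; simp_all)
    rw [this]; ring
  rw [Finset.sum_congr rfl (fun j _ => htail j), Finset.sum_const_zero]
  have e00 : M 0 0 = a i := by
    simp only [hM, Matrix.of_apply, Fin.val_zero]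
    norm_num
  have e01 : M 0 (Fin.succ 0) = 1 := by
    simp only [hM, Matrix.of_apply, Fin.val_zero, Fin.val_succ]
    split_ifs <;> first | rfl | (exfalso; omega) | simp_all | (exfalso; simp_all)
  have e1 : (M.submatrix Fin.succ (Fin.succAbove 0)).det = detK a (i+1) (n+1) := by
    rw [Fin.succAbove_zero]
    congr 1
    ext r c
    simp only [hM, Matrix.submatrix_apply, Matrix.of_apply, Fin.val_succ]
    simp only [show ((r:ℕ)+1 = (c:ℕ)+1) ↔ ((r:ℕ) = (c:ℕ)) from by omega,
        show ((r:ℕ)+1 = (c:ℕ)+1+1 ∨ (c:ℕ)+1 = (r:ℕ)+1+1)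
           ↔ ((r:ℕ) = (c:ℕ)+1 ∨ (c:ℕ) = (r:ℕ)+1) from by omega]
    by_cases h : (r:ℕ) = (c:ℕ)
    · rw [if_pos h, if_pos h]; congr 1; push_cast; ring
    · rw [if_neg h, if_neg h]
  have e2 : (M.submatrix Fin.succ (Fin.succAbove (Fin.succ 0))).det = detK a (i+2) n := by
    rw [Matrix.det_succ_column_zero, Fin.sum_univ_succ]
    have hvsA : ∀ c : Fin (n+1), (((Fin.succ 0 : Fin (n+2)).succAbove c : Fin (n+2)) : ℕ)
        = if (c:ℕ) < 1 then (c:ℕ) else (c:ℕ)+1 := by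
      intro c
      rw [val_succAbove, Fin.succ_zero_eq_one, Fin.val_one]
    have hvsA0 : (((Fin.succ 0 : Fin (n+2)).succAbove (0 : Fin (n+1)) : Fin (n+2)) : ℕ) = 0 := by
      rw [hvsA]; norm_num
    have hvsAs : ∀ c : Fin n,
        (((Fin.succ 0 : Fin (n+2)).succAbove c.succ : Fin (n+2)) : ℕ) = (c:ℕ)+2 := by
      intro c
      rw [hvsA, Fin.val_succ, if_neg (by omega)]
    have htail2 : ∀ r : Fin n,
        (-1 : ℝ) ^ ((r.succ : Fin (n+1)) : ℕ) *
          (M.submatrix Fin.succ (Fin.succAbove (Fin.succ 0))) r.succ 0 *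
          ((M.submatrix Fin.succ (Fin.succAbove (Fin.succ 0))).submatrix
            r.succ.succAbove Fin.succ).det = 0 := by
      intro r
      have : (M.submatrix Fin.succ (Fin.succAbove (Fin.succ 0))) r.succ 0 = 0 := by
        simp only [hM, Matrix.submatrix_apply, Matrix.of_apply, hvsA0, Fin.val_succ]
        split_ifs <;> first | rfl | (exfalso; omega) | simp_all | (exfalso; simp_all)
      rw [this]; ring
    rw [Finset.sum_congr rfl (fun r _ => htail2 r), Finset.sum_const_zero, add_zero]
    have ha : (M.submatrix Fin.succ (Fin.succAbove (Fin.succ 0))) 0 0 = 1 := by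
      simp only [hM, Matrix.submatrix_apply, Matrix.of_apply, hvsA0, Fin.val_succ, Fin.val_zero]
      split_ifs <;> first | rfl | (exfalso; omega) | simp_all | (exfalso; simp_all)
    rw [ha, Fin.succAbove_zero]
    have hb : ((M.submatrix Fin.succ (Fin.succAbove (Fin.succ 0))).submatrix
        Fin.succ Fin.succ) = Matrix.of (fun r c : Fin n =>
      if (r : ℕ) = (c : ℕ) then a ((i+2) + (r : ℕ))
      else if (r : ℕ) = (c : ℕ) + 1 ∨ (c : ℕ) = (r : ℕ) + 1 then 1 else 0) := by
      ext r c
      simp only [hM, Matrix.submatrix_apply, Matrix.of_apply, hvsAs, Fin.val_succ]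
      simp only [show ((r:ℕ)+1+1 = (c:ℕ)+2) ↔ ((r:ℕ) = (c:ℕ)) from by omega,
          show ((r:ℕ)+1+1 = (c:ℕ)+2+1 ∨ (c:ℕ)+2 = (r:ℕ)+1+1+1)
             ↔ ((r:ℕ) = (c:ℕ)+1 ∨ (c:ℕ) = (r:ℕ)+1) from by omega]
      by_cases h : (r:ℕ) = (c:ℕ)
      · rw [if_pos h, if_pos h]; congr 1; push_cast; ring
      · rw [if_neg h, if_neg h]
    rw [hb]
    show (-1:ℝ)^((0:Fin (n+1)):ℕ) * 1 * detK a (i+2) n = detK a (i+2) n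
    norm_num
  rw [e00, e01, e1, e2]
  simp only [Fin.val_zero, Fin.val_succ, pow_zero, pow_succ, pow_one]
  ring

lemma detK_right (a : ℤ → ℝ) : ∀ (k : ℕ) (i : ℤ),
    detK a i (k+2) = a (i + (k:ℤ) + 1) * detK a i (k+1) - detK a i k := by
  intro k
  induction k using Nat.strong_induction_on with
  | _ k ih =>
    match k with
    | 0 =>
      intro i
      rw [detK_left, detK_zero, detK_one, detK_one, detK_zero]
      push_cast
      ring
    | 1 =>
      intro i
      have e2 : ∀ j : ℤ, detK a j 2 = a j * a (j+1) - 1 := by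
        intro j; rw [detK_left, detK_one, detK_zero]
      rw [detK_left, e2, e2, detK_one, detK_one]
      push_cast
      ring
    | (k+2) =>
      intro i
      have h1 := ih (k+1) (by omega) (i+1)
      have h2 := ih k (by omega) (i+2)
      have e1 : detK a i (k+4) = a i * detK a (i+1) (k+3) - detK a (i+2) (k+2) :=
        detK_left a i (k+2)
      have e3 : detK a i (k+3) = a i * detK a (i+1) (k+2) - detK a (i+2) (k+1) :=
        detK_left a i (k+1)
      have e4 : detK a i (k+2) = a i * detK a (i+1) (k+1) - detK a (i+2) k :=
        detK_left a i k
      push_cast at h1 h2 ⊢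
      rw [show (i + 1 + ((k:ℤ) + 1) + 1) = i + (k:ℤ) + 2 + 1 by ring] at h1
      rw [show (i + 2 + (k:ℤ) + 1) = i + (k:ℤ) + 2 + 1 by ring] at h2
      rw [show (i + ((k:ℤ) + 2) + 1) = i + (k:ℤ) + 2 + 1 by ring]
      rw [e1, e3, e4, h1, h2]
      ring

lemma rep (a : ℤ → ℝ) (V : ℤ → ℝ) (hV : ∀ i : ℤ, V i = a i * V (i-1) - V (i-2)) (i : ℤ) :
    ∀ k : ℕ, V (i + (k:ℤ)) = detK a i (k+1) * V (i-1) - detK a (i+1) k * V (i-2) := by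
  intro k
  induction k using Nat.strong_induction_on with
  | _ k ih =>
    match k with
    | 0 =>
      rw [detK_one, detK_zero]
      push_cast
      rw [add_zero, one_mul]
      exact hV i
    | 1 =>
      have h0 := hV i
      have h1 := hV (i+1)
      rw [show (i+1-1) = i by ring, show (i+1-2) = i - 1 by ring] at h1
      have e2 : detK a i 2 = a (i + 1) * a i - 1 := by
        have := detK_right a 0 i
        rw [detK_one, detK_zero] at this
        push_cast at this
        rw [this]; ring
      rw [e2, detK_one]
      push_cast
      rw [h1, h0]
      ring
    | (k+2) =>
      have h1 := ih (k+1) (by omega)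
      have h2 := ih k (by omega)
      have h3 := hV (i + (k:ℤ) + 2)
      rw [show (i + (k:ℤ) + 2 - 1) = i + ((k:ℤ)+1) by ring,
          show (i + (k:ℤ) + 2 - 2) = i + (k:ℤ) by ring] at h3
      have e1 := detK_right a (k+1) i
      have e2 := detK_right a k (i+1)
      push_cast at h1 h2 h3 e1 e2 ⊢
      rw [show (i + ((k:ℤ) + 1) + 1) = i + (k:ℤ) + 2 by ring] at e1
      rw [show (i + 1 + (k:ℤ) + 1) = i + (k:ℤ) + 2 by ring] at e2
      rw [show (i + ((k:ℤ) + 2)) = i + (k:ℤ) + 2 by ring]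
      rw [show (i + ((k:ℤ) + 1)) = i + (k:ℤ) + 1 by ring] at h3 h1
      simp only [show k+1+2 = k+3 by omega, show k+2+1 = k+3 by omega,
                 show k+1+1 = k+2 by omega] at h1 e1 ⊢
      rw [h3, e1, e2, h1, h2]
      ring

noncomputable def fwdV (a : ℤ → ℝ) (i : ℤ) : ℕ → ℝ
  | 0 => 0
  | 1 => 1
  | (k+2) => a (i + (k:ℤ)) * fwdV a i (k+1) - fwdV a i k

noncomputable def bwdV (a : ℤ → ℝ) (i : ℤ) : ℕ → ℝ
  | 0 => 0
  | 1 => -1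
  | (k+2) => a (i - 2 - (k:ℤ)) * bwdV a i (k+1) - bwdV a i k

lemma fwdV_eq_detK (a : ℤ → ℝ) (i : ℤ) : ∀ k : ℕ, fwdV a i (k+2) = detK a i (k+1) := by
  intro k
  induction k using Nat.strong_induction_on with
  | _ k ih =>
    match k with
    | 0 =>
      show a (i + ((0:ℕ):ℤ)) * fwdV a i 1 - fwdV a i 0 = detK a i 1
      rw [detK_one]
      show a (i + ((0:ℕ):ℤ)) * 1 - 0 = a i
      push_cast
      ring_nf
    | 1 =>
      show a (i + ((1:ℕ):ℤ)) * fwdV a i 2 - fwdV a i 1 = detK a i 2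
      have h0 : fwdV a i 2 = detK a i 1 := ih 0 (by omega)
      have e2 := detK_right a 0 i
      rw [detK_one, detK_zero] at e2
      push_cast at e2 ⊢
      rw [h0, detK_one, e2]
      show a (i + 1) * a i - 1 = a (i + 0 + 1) * a i - 1
      ring_nf
    | (k+2) =>
      show a (i + ((k+2:ℕ):ℤ)) * fwdV a i (k+3) - fwdV a i (k+2) = detK a i (k+3)
      have h1 : fwdV a i (k+3) = detK a i (k+2) := ih (k+1) (by omega)
      have h2 : fwdV a i (k+2) = detK a i (k+1) := ih k (by omega)
      have e1 := detK_right a (k+1) i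
      push_cast at e1 ⊢
      simp only [show k+1+2 = k+3 by omega, show k+1+1 = k+2 by omega] at e1
      rw [h1, h2, e1, show (i + ((k:ℤ) + 1) + 1) = i + ((k:ℤ) + 2) by ring]

noncomputable def solV (a : ℤ → ℝ) (i : ℤ) (j : ℤ) : ℝ :=
  if 0 ≤ j - (i - 2) then fwdV a i (j - (i-2)).toNat else bwdV a i ((i-2) - j).toNat

lemma solV_f (a : ℤ → ℝ) (i : ℤ) (s : ℕ) : solV a i (i - 2 + (s:ℤ)) = fwdV a i s := by
  have hc : (0:ℤ) ≤ (i - 2 + (s:ℤ)) - (i - 2) := by omega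
  rw [solV, if_pos hc]
  congr 1
  omega

lemma solV_b (a : ℤ → ℝ) (i : ℤ) (s : ℕ) :
    solV a i (i - 2 - ((s:ℤ)+1)) = bwdV a i (s+1) := by
  have hc : ¬ (0:ℤ) ≤ (i - 2 - ((s:ℤ)+1)) - (i - 2) := by omega
  rw [solV, if_neg hc]
  congr 1
  omega

lemma solV_sol (a : ℤ → ℝ) (i : ℤ) :
    ∀ j : ℤ, solV a i j = a j * solV a i (j-1) - solV a i (j-2) := by
  have v0 : solV a i (i-2) = 0 := by
    have := solV_f a i 0
    rw [show (i - 2 + ((0:ℕ):ℤ)) = i - 2 by push_cast; ring] at this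
    rw [this]
    simp [fwdV]
  have v1 : solV a i (i-1) = 1 := by
    have := solV_f a i 1
    rw [show (i - 2 + ((1:ℕ):ℤ)) = i - 1 by push_cast; ring] at this
    rw [this]
    simp [fwdV]
  have vb1 : solV a i (i-3) = -1 := by
    have := solV_b a i 0
    rw [show (i - 2 - (((0:ℕ):ℤ)+1)) = i - 3 by push_cast; ring] at this
    rw [this]
    simp [bwdV]
  have vb2 : solV a i (i-4) = -a (i-2) := by
    have := solV_b a i 1
    rw [show (i - 2 - (((1:ℕ):ℤ)+1)) = i - 4 by push_cast; ring] at this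
    rw [this]
    show bwdV a i (0+2) = -a (i-2)
    rw [bwdV]
    simp [bwdV]
  intro j
  rcases lt_or_ge j (i-2) with hc | hc
  · obtain ⟨s, hs'⟩ : ∃ s : ℕ, j = i - 2 - ((s:ℤ)+1) := ⟨(i - 3 - j).toNat, by omega⟩
    subst hs'
    rw [show (i - 2 - ((s:ℤ)+1) - 1) = i - 2 - (((s+1:ℕ):ℤ)+1) by push_cast; ring,
        show (i - 2 - ((s:ℤ)+1) - 2) = i - 2 - (((s+2:ℕ):ℤ)+1) by push_cast; ring]
    rw [solV_b a i s, solV_b a i (s+1), solV_b a i (s+2)]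
    show bwdV a i (s+1) = a (i - 2 - ((s:ℤ)+1)) * bwdV a i (s+2) - bwdV a i (s+1+2)
    have hb3 : bwdV a i (s+1+2) = a (i - 2 - ((s+1:ℕ):ℤ)) * bwdV a i (s+2) - bwdV a i (s+1) := by
      rw [bwdV]
    rw [hb3, show (i - 2 - ((s+1:ℕ):ℤ)) = i - 2 - ((s:ℤ)+1) by push_cast; ring]
    ring
  · by_cases h0 : j = i - 2
    · subst h0
      rw [v0, show (i-2-1 : ℤ) = i - 3 by ring, show (i-2-2 : ℤ) = i - 4 by ring, vb1, vb2]
      ring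
    · by_cases h1 : j = i - 1
      · subst h1
        rw [v1, show (i-1-1 : ℤ) = i - 2 by ring, show (i-1-2 : ℤ) = i - 3 by ring, v0, vb1]
        ring
      · obtain ⟨s, hs'⟩ : ∃ s : ℕ, j = i - 2 + ((s:ℤ)+2) := ⟨(j-i).toNat, by omega⟩
        subst hs'
        rw [show (i - 2 + ((s:ℤ)+2) - 1) = i - 2 + ((s+1:ℕ):ℤ) by push_cast; ring,
            show (i - 2 + ((s:ℤ)+2) - 2) = i - 2 + ((s:ℕ):ℤ) by push_cast; ring,
            show (i - 2 + ((s:ℤ)+2)) = i - 2 + ((s+2:ℕ):ℤ) by push_cast; ring]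
        rw [solV_f a i (s+2), solV_f a i (s+1), solV_f a i s]
        rw [show (i - 2 + ((s+2:ℕ):ℤ)) = i + (s:ℤ) by push_cast; ring]
        rw [show (s+2 : ℕ) = s+1+1 from rfl]
        show fwdV a i (s+2) = _
        rw [fwdV]

theorem frieze_closed_iff_superperiodic' (m : ℕ) (a : ℤ → ℝ) :
    ((∀ i : ℤ, detK a i (m+1) = 1) ∧
     (∀ i : ℤ, detK a i (m+2) = 0)) ↔
    ((∀ i : ℤ, a (i + ((m : ℤ) + 3)) = a i) ∧
     (∀ V : ℤ → ℝ, (∀ i : ℤ, V i = a i * V (i - 1) - V (i - 2)) →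
        ∀ i : ℤ, V (i + ((m : ℤ) + 3)) = -V i)) := by
  constructor
  · rintro ⟨H1, H2⟩
    have H3 : ∀ i : ℤ, detK a i (m+3) = -1 := by
      intro i
      have h := detK_right a (m+1) i
      simp only [show m+1+2 = m+3 by omega, show m+1+1 = m+2 by omega] at h
      rw [H1, H2] at h
      rw [h]; ring
    refine ⟨?_, ?_⟩
    · intro i
      have er := detK_right a (m+2) i
      simp only [show m+2+2 = m+4 by omega, show m+2+1 = m+3 by omega] at er
      rw [H2, H3] at er
      have el := detK_left a i (m+2)
      simp only [show m+2+1 = m+3 by omega] at el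
      rw [H3 (i+1), H2 (i+2)] at el
      have key : a (i + ((m+2:ℕ):ℤ) + 1) = a i := by
        have h := er.symm.trans el
        linarith
      rw [show (i + ((m:ℤ)+3)) = i + ((m+2:ℕ):ℤ) + 1 by push_cast; ring]
      exact key
    · intro V hV i
      have h := rep a V hV (i+1) (m+2)
      simp only [show m+2+1 = m+3 by omega] at h
      rw [show (i+1+1 : ℤ) = i + 2 by ring] at h
      rw [H3 (i+1), H2 (i+2)] at h
      rw [show (i+1-1 : ℤ) = i by ring] at h
      rw [show (i + ((m:ℤ)+3)) = i + 1 + ((m+2:ℕ):ℤ) by push_cast; ring]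
      rw [h]; ring
  · rintro ⟨-, hs⟩
    have KEY : ∀ i : ℤ, detK a i (m+1) = 1 ∧ detK a i (m+2) = 0 := by
      intro i
      have A := hs (solV a i) (solV_sol a i) (i - 2)
      have B := hs (solV a i) (solV_sol a i) (i - 3)
      rw [show (i - 2 + ((m:ℤ)+3)) = i - 2 + ((m+3:ℕ):ℤ) by push_cast; ring] at A
      rw [solV_f a i (m+3)] at A
      have v0 : solV a i (i-2) = 0 := by
        have := solV_f a i 0
        rw [show (i - 2 + ((0:ℕ):ℤ)) = i - 2 by push_cast; ring] at this
        rw [this]; simp [fwdV]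
      rw [v0] at A
      rw [show (i - 3 + ((m:ℤ)+3)) = i - 2 + ((m+2:ℕ):ℤ) by push_cast; ring] at B
      rw [solV_f a i (m+2)] at B
      have vb1 : solV a i (i-3) = -1 := by
        have := solV_b a i 0
        rw [show (i - 2 - (((0:ℕ):ℤ)+1)) = i - 3 by push_cast; ring] at this
        rw [this]; simp [bwdV]
      rw [vb1] at B
      have hf2 : fwdV a i (m+2) = detK a i (m+1) := fwdV_eq_detK a i m
      have hf3 : fwdV a i (m+3) = detK a i (m+2) := by
        have := fwdV_eq_detK a i (m+1)
        simpa [show m+1+2 = m+3 by omega, show m+1+1 = m+2 by omega] using this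
      constructor
      · rw [← hf2, B]; ring
      · rw [← hf3, A]; ring
    exact ⟨fun i => (KEY i).1, fun i => (KEY i).2⟩

/-- The continuant `K(a_i, …, a_j)`: the determinant of the tridiagonal
`(j-i+1) × (j-i+1)` matrix with diagonal entries `a_i, …, a_j` and `1`'s on the
sub- and super-diagonal.  By convention, for `j = i - 1` (empty range) it is `1`. -/
noncomputable def continuant (a : ℤ → ℝ) (i j : ℤ) : ℝ :=
  Matrix.det (Matrix.of fun r c : Fin (j - i + 1).toNat =>
    if (r : ℕ) = (c : ℕ) then a (i + (r : ℕ))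
    else if (r : ℕ) = (c : ℕ) + 1 ∨ (c : ℕ) = (r : ℕ) + 1 then 1 else 0)

lemma continuant_eq_detK (a : ℤ → ℝ) (i j : ℤ) :
    continuant a i j = detK a i ((j - i + 1).toNat) := rfl

/-- **Closed friezes of width `m` correspond to `(m+3)`-superperiodic equations.**
The frieze determined by `a : ℤ → ℝ` is closed of width `m` if and only if the
difference equation `V i = a i * V (i-1) - V (i-2)` is `(m+3)`-superperiodic:
the coefficients are `(m+3)`-periodic and every solution is `(m+3)`-antiperiodic. -/
theorem frieze_closed_iff_superperiodic (m : ℕ) (a : ℤ → ℝ) :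
    ((∀ i : ℤ, continuant a i (i + (m : ℤ)) = 1) ∧
     (∀ i : ℤ, continuant a i (i + (m : ℤ) + 1) = 0)) ↔
    ((∀ i : ℤ, a (i + ((m : ℤ) + 3)) = a i) ∧
     (∀ V : ℤ → ℝ, (∀ i : ℤ, V i = a i * V (i - 1) - V (i - 2)) →
        ∀ i : ℤ, V (i + ((m : ℤ) + 3)) = -V i)) := by
  have bridge1 : ∀ i : ℤ, continuant a i (i + (m : ℤ)) = detK a i (m+1) := by
    intro i
    rw [continuant_eq_detK]
    congr 1
    omega
  have bridge2 : ∀ i : ℤ, continuant a i (i + (m : ℤ) + 1) = detK a i (m+2) := by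
    intro i
    rw [continuant_eq_detK]
    congr 1
    omega
  rw [show (∀ i : ℤ, continuant a i (i + (m : ℤ)) = 1) ↔ (∀ i : ℤ, detK a i (m+1) = 1) from
        forall_congr' fun i => by rw [bridge1],
      show (∀ i : ℤ, continuant a i (i + (m : ℤ) + 1) = 0) ↔ (∀ i : ℤ, detK a i (m+2) = 0) from
        forall_congr' fun i => by rw [bridge2]]
  exact frieze_closed_iff_superperiodic' m a
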